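/- Let κ, μ be real with μ − κ + 1/2 > 0. Then for every z > 0 the Whittaker function defined by its integral representation is differentiable and satisfies the first-order recurrence z · W_{κ,μ}'(z) = (κ − z/2) W_{κ,μ}(z) − ( μ² − (κ − 1/2)² ) W_{κ−1,μ}(z). -/

import Mathlib

open MeasureTheory Set

/-- The Whittaker function `W_{κ,μ}(x)` given by its integral representation,
valid for `μ - κ + 1/2 > 0` and `x > 0`. -/
noncomputable def whittakerW (κ μ x : ℝ) : ℝ :=
  x ^ (μ + 1/2) / Real.Gamma (μ - κ + 1/2) *
    ∫ s in Ioi (1/2 : ℝ),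
      Real.exp (-s * x) * (s + 1/2) ^ (κ + μ - 1/2) * (s - 1/2) ^ (μ - κ - 1/2)

open Filter Topology

noncomputable def Jint (q p z : ℝ) : ℝ :=
  ∫ s in Ioi (1/2 : ℝ), Real.exp (-s * z) * (s + 1/2) ^ q * (s - 1/2) ^ p

/-- continuity of the integrand on `Ioi (1/2)`. -/
lemma contOn_integrand (c q p : ℝ) :
    ContinuousOn (fun s : ℝ => Real.exp (-s * c) * (s + 1/2) ^ q * (s - 1/2) ^ p)
      (Ioi (1/2 : ℝ)) := by
  intro s hs
  have hs' : (1/2 : ℝ) < s := hs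
  refine ContinuousAt.continuousWithinAt ?_
  refine ContinuousAt.mul (ContinuousAt.mul ?_ ?_) ?_
  · exact (Real.continuous_exp.comp ((continuous_id.neg).mul continuous_const)).continuousAt
  · exact ((continuous_id.add continuous_const).continuousAt).rpow_const
      (Or.inl (by intro hh; simp only [Pi.add_apply, id_eq] at hh; nlinarith [hh]))
  · exact ((continuous_id.sub continuous_const).continuousAt).rpow_const
      (Or.inl (by intro hh; simp only [Pi.sub_apply, id_eq] at hh; nlinarith [sub_eq_zero.mp hh]))

/-- bound at infinity. -/
lemma bound_at_top {c q p s : ℝ} (hs : 1 ≤ s) :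
    Real.exp (-s * c) * (s + 1/2) ^ q * (s - 1/2) ^ p ≤
      (2 ^ |q| * 2 ^ |p|) * (s ^ (|q| + |p|) * Real.exp (-c * s)) := by
  have hs0 : (0:ℝ) < s := by linarith
  have h1 : (s + 1/2) ^ q ≤ 2 ^ |q| * s ^ |q| := by
    rcases le_or_gt 0 q with hq | hq
    · have : (s + 1/2) ^ q ≤ (2 * s) ^ q :=
        Real.rpow_le_rpow (by linarith) (by linarith) hq
      calc (s + 1/2) ^ q ≤ (2 * s) ^ q := this
        _ = 2 ^ q * s ^ q := Real.mul_rpow (by norm_num) hs0.le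
        _ ≤ 2 ^ |q| * s ^ |q| :=
            mul_le_mul (Real.rpow_le_rpow_of_exponent_le (by norm_num) (le_abs_self q))
              (Real.rpow_le_rpow_of_exponent_le hs (le_abs_self q))
              (Real.rpow_nonneg hs0.le q) (Real.rpow_nonneg (by norm_num) _)
    · have h2 : (s + 1/2) ^ q ≤ 1 :=
        Real.rpow_le_one_of_one_le_of_nonpos (by linarith) hq.le
      have h3 : (1:ℝ) ≤ 2 ^ |q| * s ^ |q| := by
        have := Real.one_le_rpow (show (1:ℝ) ≤ 2 by norm_num) (abs_nonneg q)
        have := Real.one_le_rpow hs (abs_nonneg q)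
        nlinarith
      linarith
  have h2 : (s - 1/2) ^ p ≤ 2 ^ |p| * s ^ |p| := by
    rcases le_or_gt 0 p with hp | hp
    · calc (s - 1/2) ^ p ≤ s ^ p := Real.rpow_le_rpow (by linarith) (by linarith) hp
        _ ≤ s ^ |p| := Real.rpow_le_rpow_of_exponent_le hs (le_abs_self p)
        _ ≤ 2 ^ |p| * s ^ |p| := by
            nlinarith [Real.one_le_rpow (show (1:ℝ) ≤ 2 by norm_num) (abs_nonneg p),
              Real.rpow_nonneg hs0.le |p|]
    · have h2a : (s - 1/2) ^ p ≤ (1/2 : ℝ) ^ p :=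
        Real.rpow_le_rpow_of_nonpos (by norm_num) (by linarith) hp.le
      have h2b : ((1:ℝ)/2) ^ p = 2 ^ (-p) := by
        rw [Real.rpow_neg (by norm_num), ← Real.inv_rpow (by norm_num), one_div]
      have h2c : (2:ℝ) ^ (-p) ≤ 2 ^ |p| :=
        Real.rpow_le_rpow_of_exponent_le (by norm_num) (neg_le_abs p)
      have h2d : (1:ℝ) ≤ s ^ |p| := Real.one_le_rpow hs (abs_nonneg p)
      nlinarith [Real.rpow_nonneg (show (0:ℝ) ≤ 2 by norm_num) |p|]
  have he : Real.exp (-s * c) = Real.exp (-c * s) := by ring_nf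
  have hepos : 0 ≤ Real.exp (-c * s) := (Real.exp_pos _).le
  have hq0 : 0 ≤ (s + 1/2) ^ q := Real.rpow_nonneg (by linarith) _
  have hp0 : 0 ≤ (s - 1/2) ^ p := Real.rpow_nonneg (by linarith) _
  have h2q0 : 0 ≤ (2:ℝ) ^ |q| * s ^ |q| := by positivity
  have hrw : s ^ |q| * s ^ |p| = s ^ (|q| + |p|) := (Real.rpow_add hs0 _ _).symm
  calc Real.exp (-s * c) * (s + 1/2) ^ q * (s - 1/2) ^ p
      ≤ Real.exp (-c * s) * (2 ^ |q| * s ^ |q|) * (2 ^ |p| * s ^ |p|) := by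
        rw [he]; gcongr
    _ = (2 ^ |q| * 2 ^ |p|) * (s ^ (|q| + |p|) * Real.exp (-c * s)) := by
        rw [← hrw]; ring

lemma integrableOn_integrand {c p : ℝ} (q : ℝ) (hc : 0 < c) (hp : -1 < p) :
    IntegrableOn (fun s : ℝ => Real.exp (-s * c) * (s + 1/2) ^ q * (s - 1/2) ^ p)
      (Ioi (1/2 : ℝ)) := by
  have hsplit : Ioi (1/2 : ℝ) = Ioc (1/2 : ℝ) 1 ∪ Ioi 1 :=
    (Ioc_union_Ioi_eq_Ioi (by norm_num)).symm
  rw [hsplit]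
  apply IntegrableOn.union
  · -- on Ioc (1/2) 1
    have hmeas : AEStronglyMeasurable
        (fun s : ℝ => Real.exp (-s * c) * (s + 1/2) ^ q * (s - 1/2) ^ p)
        (volume.restrict (Ioc (1/2 : ℝ) 1)) :=
      ((contOn_integrand c q p).mono Ioc_subset_Ioi_self).aestronglyMeasurable
        measurableSet_Ioc
    have hint : IntegrableOn (fun s : ℝ => ((3/2: ℝ) ^ q + 1) * (s - 1/2) ^ p)
        (Ioc (1/2 : ℝ) 1) := by
      apply Integrable.const_mul
      have h0 : IntervalIntegrable (fun x : ℝ => x ^ p) volume 0 (1/2) :=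
        intervalIntegral.intervalIntegrable_rpow' hp
      have h1 := h0.comp_sub_right (1/2)
      norm_num at h1
      exact (intervalIntegrable_iff_integrableOn_Ioc_of_le (by norm_num)).mp h1
    apply hint.mono' hmeas
    rw [ae_restrict_iff' measurableSet_Ioc]
    filter_upwards with s hs
    have hs1 : (1/2 : ℝ) < s := hs.1
    have hs2 : s ≤ 1 := hs.2
    have hb0 : (0:ℝ) ≤ (s - 1/2) ^ p := Real.rpow_nonneg (by linarith) _
    have hq0 : (0:ℝ) ≤ (s + 1/2) ^ q := Real.rpow_nonneg (by linarith) _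
    have hqb : (s + 1/2) ^ q ≤ (3/2 : ℝ) ^ q + 1 := by
      rcases le_or_gt 0 q with hq | hq
      · have : (s + 1/2) ^ q ≤ (3/2 : ℝ) ^ q :=
          Real.rpow_le_rpow (by linarith) (by linarith) hq
        linarith
      · have h2 : (s + 1/2) ^ q ≤ 1 :=
          Real.rpow_le_one_of_one_le_of_nonpos (by linarith) hq.le
        have h3 : (0:ℝ) ≤ (3/2 : ℝ) ^ q := Real.rpow_nonneg (by norm_num) _
        linarith
    have he : Real.exp (-s * c) ≤ 1 := by
      rw [Real.exp_le_one_iff]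
      nlinarith
    rw [Real.norm_eq_abs, abs_of_nonneg (by positivity)]
    calc Real.exp (-s * c) * (s + 1/2) ^ q * (s - 1/2) ^ p
        ≤ 1 * ((3/2 : ℝ) ^ q + 1) * (s - 1/2) ^ p := by
          apply mul_le_mul_of_nonneg_right _ hb0
          calc Real.exp (-s * c) * (s + 1/2) ^ q ≤ 1 * (s + 1/2) ^ q :=
                mul_le_mul_of_nonneg_right he hq0
            _ ≤ 1 * ((3/2 : ℝ) ^ q + 1) := by
                rw [one_mul, one_mul]; exact hqb
      _ = ((3/2 : ℝ) ^ q + 1) * (s - 1/2) ^ p := by ring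
  · -- on Ioi 1
    have hmeas : AEStronglyMeasurable
        (fun s : ℝ => Real.exp (-s * c) * (s + 1/2) ^ q * (s - 1/2) ^ p)
        (volume.restrict (Ioi (1 : ℝ))) :=
      ((contOn_integrand c q p).mono (fun x hx => lt_trans (by norm_num) hx)).aestronglyMeasurable
        measurableSet_Ioi
    have hint : IntegrableOn
        (fun s : ℝ => (2 ^ |q| * 2 ^ |p|) * (s ^ (|q| + |p|) * Real.exp (-c * s)))
        (Ioi (1 : ℝ)) := by
      apply Integrable.const_mul
      have h0 := integrableOn_rpow_mul_exp_neg_mul_rpow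
        (show -1 < |q| + |p| by have := abs_nonneg q; have := abs_nonneg p; linarith) (by norm_num : (0:ℝ) < 1) hc
      simp only [Real.rpow_one] at h0
      exact h0.mono_set (fun x hx => lt_trans (show (0:ℝ) < 1 by norm_num) hx)
    apply hint.mono' hmeas
    rw [ae_restrict_iff' measurableSet_Ioi]
    filter_upwards with s hs
    have hs1 : (1:ℝ) < s := hs
    rw [Real.norm_eq_abs, abs_of_nonneg (mul_nonneg (mul_nonneg (Real.exp_pos _).le
      (Real.rpow_nonneg (by linarith) _)) (Real.rpow_nonneg (by linarith) _))]
    exact bound_at_top hs1.le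

lemma hasDerivAt_Jint (q p : ℝ) (hp : -1 < p) {z : ℝ} (hz : 0 < z) :
    HasDerivAt (fun x => Jint q p x)
      (∫ s in Ioi (1/2 : ℝ), -s * (Real.exp (-s * z) * (s + 1/2) ^ q * (s - 1/2) ^ p)) z := by
  have key := hasDerivAt_integral_of_dominated_loc_of_deriv_le
    (F := fun (x : ℝ) (s : ℝ) => Real.exp (-s * x) * (s + 1/2) ^ q * (s - 1/2) ^ p)
    (F' := fun (x : ℝ) (s : ℝ) => -s * (Real.exp (-s * x) * (s + 1/2) ^ q * (s - 1/2) ^ p))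
    (μ := volume.restrict (Ioi (1/2 : ℝ))) (x₀ := z)
    (bound := fun s => Real.exp (-s * (z/2)) * (s + 1/2) ^ (q+1) * (s - 1/2) ^ p)
    (Metric.ball_mem_nhds z (half_pos hz))
    (Eventually.of_forall fun x =>
      ((contOn_integrand x q p).aestronglyMeasurable measurableSet_Ioi))
    (integrableOn_integrand q hz hp)
    (((continuous_id.neg.continuousOn).mul (contOn_integrand z q p)).aestronglyMeasurable
      measurableSet_Ioi)
    ?_ (integrableOn_integrand (q+1) (half_pos hz) hp) ?_
  · exact key.2
  · -- bound
    rw [ae_restrict_iff' measurableSet_Ioi]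
    filter_upwards with s hs x hx
    have hs1 : (1/2 : ℝ) < s := hs
    have hs0 : (0:ℝ) < s := by linarith
    have hx2 : z/2 < x := by
      have := abs_lt.mp (mem_ball_iff_norm.mp hx)
      linarith [this.1]
    have hA : (0:ℝ) ≤ (s + 1/2) ^ q := Real.rpow_nonneg (by linarith) _
    have hB : (0:ℝ) ≤ (s - 1/2) ^ p := Real.rpow_nonneg (by linarith) _
    have he : Real.exp (-s * x) ≤ Real.exp (-s * (z/2)) := by
      apply Real.exp_le_exp.mpr
      nlinarith
    rw [Real.norm_eq_abs, abs_mul, abs_neg, abs_of_pos hs0,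
      abs_of_nonneg (by positivity)]
    have hstep : s * (Real.exp (-s * x) * (s + 1/2) ^ q * (s - 1/2) ^ p) ≤
        (s + 1/2) * (Real.exp (-s * (z/2)) * (s + 1/2) ^ q * (s - 1/2) ^ p) := by
      apply mul_le_mul (by linarith) _ (by positivity) (by linarith)
      exact mul_le_mul_of_nonneg_right (mul_le_mul_of_nonneg_right he hA) hB
    calc s * (Real.exp (-s * x) * (s + 1/2) ^ q * (s - 1/2) ^ p)
        ≤ (s + 1/2) * (Real.exp (-s * (z/2)) * (s + 1/2) ^ q * (s - 1/2) ^ p) := hstep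
      _ = Real.exp (-s * (z/2)) * (s + 1/2) ^ (q+1) * (s - 1/2) ^ p := by
          rw [Real.rpow_add_one (by intro hh; nlinarith [hh]) q]; ring
  · -- differentiability in x
    filter_upwards with s x _
    have h1 : HasDerivAt (fun x : ℝ => Real.exp (-s * x)) (Real.exp (-s * x) * (-s * 1)) x :=
      ((hasDerivAt_id x).const_mul (-s)).exp
    have h2 := (h1.mul_const ((s + 1/2) ^ q)).mul_const ((s - 1/2) ^ p)
    refine h2.congr_deriv ?_
    ring

lemma hasDerivAt_Jint' (q p : ℝ) (hp : -1 < p) {z : ℝ} (hz : 0 < z) :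
    HasDerivAt (fun x => Jint q p x)
      (-Jint q (p+1) z - (1/2) * Jint q p z) z := by
  have h := hasDerivAt_Jint q p hp hz
  convert h using 1
  have h1 : IntegrableOn
      (fun s : ℝ => Real.exp (-s * z) * (s + 1/2) ^ q * (s - 1/2) ^ (p+1))
      (Ioi (1/2 : ℝ)) := integrableOn_integrand q hz (by linarith)
  have h2 : IntegrableOn
      (fun s : ℝ => Real.exp (-s * z) * (s + 1/2) ^ q * (s - 1/2) ^ p)
      (Ioi (1/2 : ℝ)) := integrableOn_integrand q hz hp
  rw [eq_comm]
  have hcongr : ∫ s in Ioi (1/2 : ℝ), -s * (Real.exp (-s * z) * (s + 1/2) ^ q * (s - 1/2) ^ p) =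
      ∫ s in Ioi (1/2 : ℝ),
        (-(Real.exp (-s * z) * (s + 1/2) ^ q * (s - 1/2) ^ (p+1)) -
          (1/2) * (Real.exp (-s * z) * (s + 1/2) ^ q * (s - 1/2) ^ p)) := by
    apply setIntegral_congr_fun measurableSet_Ioi
    intro s hs
    have hs1 : (1/2 : ℝ) < s := hs
    dsimp only
    rw [Real.rpow_add_one (by intro hh; nlinarith [sub_eq_zero.mp hh]) p]
    ring
  have hcongr2 : ∫ s in Ioi (1/2 : ℝ),
      (-(Real.exp (-s * z) * (s + 1/2) ^ q * (s - 1/2) ^ (p+1)) -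
        (1/2) * (Real.exp (-s * z) * (s + 1/2) ^ q * (s - 1/2) ^ p)) =
      (∫ s in Ioi (1/2 : ℝ), (-1 : ℝ) * (Real.exp (-s * z) * (s + 1/2) ^ q * (s - 1/2) ^ (p+1)))
       - ∫ s in Ioi (1/2 : ℝ), (1/2 : ℝ) * (Real.exp (-s * z) * (s + 1/2) ^ q * (s - 1/2) ^ p) := by
    rw [← integral_sub (h1.const_mul (-1)) (h2.const_mul (1/2))]
    apply setIntegral_congr_fun measurableSet_Ioi
    intro s _
    ring
  rw [hcongr, hcongr2, integral_const_mul, integral_const_mul]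
  simp only [Jint]
  ring

lemma key_identity (a b : ℝ) (hb : -1 < b) {z : ℝ} (hz : 0 < z) :
    (b+1) * Jint a b z + a * Jint (a-1) (b+1) z - z * Jint a (b+1) z = 0 := by
  set G : ℝ → ℝ := fun s => Real.exp (-s * z) * (s + 1/2) ^ a * (s - 1/2) ^ (b+1) with hG
  set G' : ℝ → ℝ := fun s =>
      -z * (Real.exp (-s * z) * (s + 1/2) ^ a * (s - 1/2) ^ (b+1))
      + a * (Real.exp (-s * z) * (s + 1/2) ^ (a-1) * (s - 1/2) ^ (b+1))
      + (b+1) * (Real.exp (-s * z) * (s + 1/2) ^ a * (s - 1/2) ^ b) with hG'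
  have hi1 : IntegrableOn
      (fun s : ℝ => Real.exp (-s * z) * (s + 1/2) ^ a * (s - 1/2) ^ (b+1))
      (Ioi (1/2 : ℝ)) := integrableOn_integrand a hz (by linarith)
  have hi2 : IntegrableOn
      (fun s : ℝ => Real.exp (-s * z) * (s + 1/2) ^ (a-1) * (s - 1/2) ^ (b+1))
      (Ioi (1/2 : ℝ)) := integrableOn_integrand (a-1) hz (by linarith)
  have hi3 : IntegrableOn
      (fun s : ℝ => Real.exp (-s * z) * (s + 1/2) ^ a * (s - 1/2) ^ b)
      (Ioi (1/2 : ℝ)) := integrableOn_integrand a hz hb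
  have h1 : IntegrableOn G' (Ioi (1/2 : ℝ)) :=
    ((hi1.const_mul (-z)).add (hi2.const_mul a)).add (hi3.const_mul (b+1))
  have hderiv : ∀ s ∈ Ioi (1/2 : ℝ), HasDerivAt G (G' s) s := by
    intro s hs
    have hs1 : (1/2 : ℝ) < s := hs
    have hne1 : s + 1/2 ≠ 0 := by intro hh; nlinarith [hh]
    have hne2 : s - 1/2 ≠ 0 := by intro hh; nlinarith [sub_eq_zero.mp hh]
    have he : HasDerivAt (fun s : ℝ => Real.exp (-s * z)) (Real.exp (-s * z) * (-1 * z)) s :=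
      ((hasDerivAt_id s).neg.mul_const z).exp
    have hA : HasDerivAt (fun s : ℝ => (s + 1/2) ^ a) (1 * a * (s + 1/2) ^ (a - 1)) s :=
      ((hasDerivAt_id s).add_const (1/2)).rpow_const (Or.inl hne1)
    have hB : HasDerivAt (fun s : ℝ => (s - 1/2) ^ (b+1)) (1 * (b+1) * (s - 1/2) ^ (b+1-1)) s :=
      ((hasDerivAt_id s).sub_const (1/2)).rpow_const (Or.inl hne2)
    have := (he.mul hA).mul hB
    refine this.congr_deriv ?_
    rw [hG']
    simp only [Pi.mul_apply]
    rw [show b + 1 - 1 = b by ring]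
    ring
  have hcont : ContinuousWithinAt G (Ici (1/2 : ℝ)) (1/2) := by
    apply ContinuousAt.continuousWithinAt
    refine ContinuousAt.mul (ContinuousAt.mul ?_ ?_) ?_
    · exact (Real.continuous_exp.comp ((continuous_id.neg).mul continuous_const)).continuousAt
    · exact ((continuous_id.add continuous_const).continuousAt).rpow_const
        (Or.inl (by norm_num))
    · exact ((continuous_id.sub continuous_const).continuousAt).rpow_const
        (Or.inr (by linarith))
  have htop : Tendsto G atTop (𝓝 0) := by
    apply squeeze_zero' (f := G)
      (g := fun s => (2 ^ |a| * 2 ^ |b+1|) * (s ^ (|a| + |b+1|) * Real.exp (-z * s)))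
    · filter_upwards [eventually_ge_atTop (1:ℝ)] with s hs
      have : (0:ℝ) ≤ s - 1/2 := by linarith
      exact mul_nonneg (mul_nonneg (Real.exp_pos _).le (Real.rpow_nonneg (by linarith) _))
        (Real.rpow_nonneg this _)
    · filter_upwards [eventually_ge_atTop (1:ℝ)] with s hs
      exact bound_at_top hs
    · have := (tendsto_rpow_mul_exp_neg_mul_atTop_nhds_zero (|a| + |b+1|) z hz).const_mul
        (2 ^ |a| * 2 ^ |b+1|)
      simpa using this
  have hint := integral_Ioi_of_hasDerivAt_of_tendsto hcont hderiv h1 htop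
  have hG0 : G (1/2) = 0 := by
    rw [hG]
    simp only
    rw [show (1/2 : ℝ) - 1/2 = 0 by ring, Real.zero_rpow (by linarith), mul_zero]
  rw [hG0, sub_zero] at hint
  have ha1 : Integrable (fun s : ℝ => -z * (Real.exp (-s * z) * (s + 1/2) ^ a * (s - 1/2) ^ (b+1)))
      (volume.restrict (Ioi (1/2 : ℝ))) := hi1.const_mul (-z)
  have ha2 : Integrable (fun s : ℝ => a * (Real.exp (-s * z) * (s + 1/2) ^ (a-1) * (s - 1/2) ^ (b+1)))
      (volume.restrict (Ioi (1/2 : ℝ))) := hi2.const_mul a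
  have ha3 : Integrable (fun s : ℝ => (b+1) * (Real.exp (-s * z) * (s + 1/2) ^ a * (s - 1/2) ^ b))
      (volume.restrict (Ioi (1/2 : ℝ))) := hi3.const_mul (b+1)
  have ha12 : Integrable (fun s : ℝ =>
      -z * (Real.exp (-s * z) * (s + 1/2) ^ a * (s - 1/2) ^ (b+1))
      + a * (Real.exp (-s * z) * (s + 1/2) ^ (a-1) * (s - 1/2) ^ (b+1)))
      (volume.restrict (Ioi (1/2 : ℝ))) := ha1.add ha2
  have hexp : ∫ s in Ioi (1/2 : ℝ), G' s =
      -z * Jint a (b+1) z + a * Jint (a-1) (b+1) z + (b+1) * Jint a b z := by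
    rw [hG']
    rw [integral_add ha12 ha3, integral_add ha1 ha2,
      integral_const_mul, integral_const_mul, integral_const_mul]
    rfl
  rw [hexp] at hint
  linarith


/-- The first-order recurrence relation
`z W_{κ,μ}'(z) = (κ - z/2) W_{κ,μ}(z) - (μ² - (κ-1/2)²) W_{κ-1,μ}(z)`. -/
theorem stmt_7 (κ μ : ℝ) (h : μ - κ + 1/2 > 0) :
    ∀ z > (0:ℝ), DifferentiableAt ℝ (whittakerW κ μ) z ∧
      z * deriv (whittakerW κ μ) z =
        (κ - z / 2) * whittakerW κ μ z -
          (μ ^ 2 - (κ - 1/2) ^ 2) * whittakerW (κ - 1) μ z := by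
  intro z hz
  have hB1 : (-1 : ℝ) < μ - κ - 1/2 := by linarith
  have hν : (μ - κ + 1/2 : ℝ) ≠ 0 := ne_of_gt h
  have hΓpos : 0 < Real.Gamma (μ - κ + 1/2) := Real.Gamma_pos_of_pos h
  have hΓ : Real.Gamma (μ - κ + 1/2) ≠ 0 := hΓpos.ne'
  have hWfun : whittakerW κ μ =
      fun x => x ^ (μ + 1/2) / Real.Gamma (μ - κ + 1/2) *
        Jint (κ + μ - 1/2) (μ - κ - 1/2) x := rfl
  have hpow : HasDerivAt (fun x : ℝ => x ^ (μ + 1/2))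
      ((μ + 1/2) * z ^ (μ + 1/2 - 1)) z :=
    Real.hasDerivAt_rpow_const (Or.inl hz.ne')
  have hJ := hasDerivAt_Jint' (κ + μ - 1/2) (μ - κ - 1/2) hB1 hz
  have hW : HasDerivAt (whittakerW κ μ)
      (((μ + 1/2) * z ^ (μ + 1/2 - 1) / Real.Gamma (μ - κ + 1/2)) *
          Jint (κ + μ - 1/2) (μ - κ - 1/2) z +
        z ^ (μ + 1/2) / Real.Gamma (μ - κ + 1/2) *
          (-Jint (κ + μ - 1/2) (μ - κ - 1/2 + 1) z -
            (1/2) * Jint (κ + μ - 1/2) (μ - κ - 1/2) z)) z := by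
    rw [hWfun]
    exact (hpow.div_const _).mul hJ
  refine ⟨hW.differentiableAt, ?_⟩
  rw [hW.deriv]
  have hkey := key_identity (κ + μ - 1/2) (μ - κ - 1/2) hB1 hz
  have hW1 : whittakerW κ μ z = z ^ (μ + 1/2) / Real.Gamma (μ - κ + 1/2) *
      Jint (κ + μ - 1/2) (μ - κ - 1/2) z := rfl
  have hW2 : whittakerW (κ - 1) μ z = z ^ (μ + 1/2) / Real.Gamma (μ - (κ - 1) + 1/2) *
      Jint (κ - 1 + μ - 1/2) (μ - (κ - 1) - 1/2) z := rfl
  rw [show κ - 1 + μ - 1/2 = κ + μ - 1/2 - 1 from by ring,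
    show μ - (κ - 1) - 1/2 = μ - κ - 1/2 + 1 from by ring,
    show μ - (κ - 1) + 1/2 = (μ - κ + 1/2) + 1 from by ring,
    Real.Gamma_add_one hν] at hW2
  have hzz : z * z ^ (μ + 1/2 - 1) = z ^ (μ + 1/2) := by
    have h0 := Real.rpow_add_one hz.ne' (μ + 1/2 - 1)
    rw [show μ + 1/2 - 1 + 1 = μ + 1/2 from by ring] at h0
    rw [h0]; ring
  have hW2' : (μ ^ 2 - (κ - 1/2) ^ 2) * whittakerW (κ - 1) μ z =
      (κ + μ - 1/2) * (z ^ (μ + 1/2) / Real.Gamma (μ - κ + 1/2) *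
        Jint (κ + μ - 1/2 - 1) (μ - κ - 1/2 + 1) z) := by
    rw [hW2, show μ ^ 2 - (κ - 1/2) ^ 2 = (κ + μ - 1/2) * (μ - κ + 1/2) from by ring]
    generalize hgen : μ - κ + 1/2 = ν at hν hΓ ⊢
    have hs : z ^ (μ + 1/2) / (ν * Real.Gamma ν) * ν = z ^ (μ + 1/2) / Real.Gamma ν := by
      field_simp
    linear_combination ((κ + μ - 1/2) * Jint (κ + μ - 1/2 - 1) (μ - κ - 1/2 + 1) z) * hs
  rw [hW1, hW2']
  linear_combination (z ^ (μ + 1/2) / Real.Gamma (μ - κ + 1/2)) * hkey +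
    ((μ + 1/2) * Jint (κ + μ - 1/2) (μ - κ - 1/2) z / Real.Gamma (μ - κ + 1/2)) * hzz
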